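/- If for every K ⊆ Λ and α ∈ {0,1}^K the folded function P^{K,α}(ω) = P(α·ω)P(α·ω̄) satisfies the FKG lattice condition on {0,1}^{K^c}, then P satisfies the FKG lattice condition on {0,1}^Λ. (Uses symmetry of foldings: P^{K,α}(ω̄) = P^{K,α}(ω).) -/
import Mathlib


variable {Λ : Type*}

/-- Concatenation `α·ω`: agrees with `α` on `K` and with `ω` on `Kᶜ`. -/
def glue (K : Finset Λ) [DecidableEq Λ] (α ω : Λ → Bool) : Λ → Bool :=
  fun i => if i ∈ K then α i else ω i

/-- Coordinatewise flip. -/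
def flipC (ω : Λ → Bool) : Λ → Bool := fun i => !ω i

/-- if every folding `P^{K,α}(ω) = P(α·ω)·P(α·ω̄)` satisfies the FKG
lattice condition, then so does `P`. -/
theorem fkg_of_foldings_fkg [DecidableEq Λ] [Fintype Λ]
    (P : (Λ → Bool) → ℝ) (h0 : ∀ ω, 0 ≤ P ω)
    (hfold : ∀ (K : Finset Λ) (α : Λ → Bool), ∀ ω ω' : Λ → Bool,
      (P (glue K α ω) * P (glue K α (flipC ω))) *
        (P (glue K α ω') * P (glue K α (flipC ω'))) ≤
      (P (glue K α fun i => ω i || ω' i) *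
          P (glue K α (flipC fun i => ω i || ω' i))) *
        (P (glue K α fun i => ω i && ω' i) *
          P (glue K α (flipC fun i => ω i && ω' i)))) :
    ∀ ω ω' : Λ → Bool,
      P ω * P ω' ≤ P (fun i => ω i || ω' i) * P (fun i => ω i && ω' i) := by
  intro ω ω'
  classical
  set K : Finset Λ := Finset.univ.filter (fun i => ω i = ω' i) with hK
  have hmem : ∀ i, i ∈ K ↔ ω i = ω' i := by intro i; simp [hK]
  have h := hfold K ω ω ω'
  have e1 : glue K ω ω = ω := by
    funext i; simp [glue]
  have e2 : glue K ω (flipC ω) = ω' := by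
    funext i
    by_cases hi : i ∈ K
    · simpa [glue, hi] using (hmem i).1 hi
    · have hne : ω i ≠ ω' i := fun h => hi ((hmem i).2 h)
      simp only [glue, flipC, if_neg hi]
      cases hω : ω i <;> cases hω' : ω' i <;> simp_all
  have e3 : glue K ω ω' = ω' := by
    funext i
    by_cases hi : i ∈ K
    · simpa [glue, hi] using (hmem i).1 hi
    · simp [glue, hi]
  have e4 : glue K ω (flipC ω') = ω := by
    funext i
    by_cases hi : i ∈ K
    · simp [glue, hi]
    · have hne : ω i ≠ ω' i := fun h => hi ((hmem i).2 h)
      simp only [glue, flipC, if_neg hi]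
      cases hω : ω i <;> cases hω' : ω' i <;> simp_all
  have e5 : glue K ω (fun i => ω i || ω' i) = fun i => ω i || ω' i := by
    funext i
    by_cases hi : i ∈ K
    · have := (hmem i).1 hi
      simp [glue, hi, ← this]
    · simp [glue, hi]
  have e6 : glue K ω (flipC fun i => ω i || ω' i) = fun i => ω i && ω' i := by
    funext i
    by_cases hi : i ∈ K
    · have := (hmem i).1 hi
      simp [glue, hi, ← this]
    · have hne : ω i ≠ ω' i := fun h => hi ((hmem i).2 h)
      simp only [glue, flipC, if_neg hi]
      cases hω : ω i <;> cases hω' : ω' i <;> simp_all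
  have e7 : glue K ω (fun i => ω i && ω' i) = fun i => ω i && ω' i := by
    funext i
    by_cases hi : i ∈ K
    · have := (hmem i).1 hi
      simp [glue, hi, ← this]
    · simp [glue, hi]
  have e8 : glue K ω (flipC fun i => ω i && ω' i) = fun i => ω i || ω' i := by
    funext i
    by_cases hi : i ∈ K
    · have := (hmem i).1 hi
      simp [glue, hi, ← this]
    · have hne : ω i ≠ ω' i := fun h => hi ((hmem i).2 h)
      simp only [glue, flipC, if_neg hi]
      cases hω : ω i <;> cases hω' : ω' i <;> simp_all
  rw [e1, e2, e3, e4, e5, e6, e7, e8] at h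
  have ha : 0 ≤ P ω * P ω' := mul_nonneg (h0 _) (h0 _)
  have hb : 0 ≤ P (fun i => ω i || ω' i) * P (fun i => ω i && ω' i) :=
    mul_nonneg (h0 _) (h0 _)
  nlinarith [h, ha, hb]
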